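/- arXiv:2209.04373 — 4 statements merged into one kernel-verified Lean document; each statement's English description precedes it below -/
import Mathlib

section
/- For any x, y ∈ ℝ^n, the vector x↓ + y↑ is majorized by the vector x↓ + y, where addition is componentwise, x↓ is x sorted nonincreasingly and y↑ is y sorted nondecreasingly. -/
open Finset

/-- Nondecreasing rearrangement of a finite vector. -/
def sortAsc {n : ℕ} {α : Type*} [LinearOrder α] (x : Fin n → α) : Fin n → α :=
  x ∘ Tuple.sort x

/-- Nonincreasing rearrangement of a finite vector. -/
def sortDesc {n : ℕ} {α : Type*} [LinearOrder α] (x : Fin n → α) : Fin n → α :=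
  fun i => sortAsc x i.rev

/-- Sum of the entries of `f` at positions `< k`. -/
def psum {n : ℕ} {α : Type*} [AddCommMonoid α] (f : Fin n → α) (k : ℕ) : α :=
  ∑ i : Fin n, if (i : ℕ) < k then f i else 0

/-- `x` is majorized by `y`: every partial sum of the `k` largest entries of `x`
is at most that of `y`, and the total sums agree. -/
def Maj {n : ℕ} {α : Type*} [AddCommMonoid α] [LinearOrder α] [IsOrderedAddMonoid α] (x y : Fin n → α) : Prop :=
  (∀ k : ℕ, psum (sortDesc x) k ≤ psum (sortDesc y) k) ∧ (∑ i, x i) = ∑ i, y i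

/-- Weak submajorization: the sum of the `k` largest entries of `x` is at most
that of `y`, for every `k`. -/
def WeakSub {n : ℕ} {α : Type*} [AddCommMonoid α] [LinearOrder α] [IsOrderedAddMonoid α] (x y : Fin n → α) : Prop :=
  ∀ k : ℕ, psum (sortDesc x) k ≤ psum (sortDesc y) k

/-- Weak supermajorization: the sum of the `k` smallest entries of `x` is at least
that of `y`, for every `k`. -/
def WeakSuper {n : ℕ} {α : Type*} [AddCommMonoid α] [LinearOrder α] [IsOrderedAddMonoid α] (x y : Fin n → α) : Prop :=
  ∀ k : ℕ, psum (sortAsc y) k ≤ psum (sortAsc x) k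

def topIdx (n k : ℕ) : Finset (Fin n) := univ.filter (fun i => n - k ≤ (i : ℕ))

lemma psum_sortDesc_eq {n : ℕ} (u : Fin n → ℝ) (k : ℕ) :
    psum (sortDesc u) k = ∑ i ∈ topIdx n k, u (Tuple.sort u i) := by
  unfold psum sortDesc sortAsc topIdx
  rw [← Equiv.sum_comp Fin.revPerm
      (fun i : Fin n => if (i : ℕ) < k then (u ∘ Tuple.sort u) i.rev else 0)]
  rw [sum_filter]
  refine Finset.sum_congr rfl fun i _ => ?_
  simp only [Fin.revPerm_apply, Fin.rev_rev, Function.comp_apply]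
  refine if_congr ?_ rfl rfl
  rw [Fin.val_rev]
  have := i.isLt
  omega

lemma sum_le_sum_of_forall_le {n : ℕ} (g : Fin n → ℝ) (A B : Finset (Fin n))
    (hcard : A.card = B.card) (hle : ∀ a ∈ A, ∀ b ∈ B, g a ≤ g b) :
    ∑ i ∈ A, g i ≤ ∑ i ∈ B, g i := by
  let e := Finset.equivOfCardEq hcard
  calc ∑ i ∈ A, g i = ∑ a : A, g a := (Finset.sum_coe_sort A g).symm
    _ ≤ ∑ a : A, g (e a) := Finset.sum_le_sum fun a _ => hle a a.2 (e a) (e a).2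
    _ = ∑ b : B, g b := Equiv.sum_comp e (fun b => g (b : Fin n))
    _ = ∑ i ∈ B, g i := Finset.sum_coe_sort B g

lemma sum_le_sum_topIdx {n : ℕ} (g : Fin n → ℝ) (hg : Monotone g) (k : ℕ)
    (S : Finset (Fin n)) (hcard : S.card = (topIdx n k).card) :
    ∑ i ∈ S, g i ≤ ∑ i ∈ topIdx n k, g i := by
  set T := topIdx n k with hT
  have hmemT : ∀ i : Fin n, i ∈ T ↔ n - k ≤ (i : ℕ) := by
    intro i; simp [hT, topIdx]
  have h1 : ∑ i ∈ S ∩ T, g i + ∑ i ∈ S \ T, g i = ∑ i ∈ S, g i :=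
    Finset.sum_inter_add_sum_sdiff S T g
  have h2 : ∑ i ∈ T ∩ S, g i + ∑ i ∈ T \ S, g i = ∑ i ∈ T, g i :=
    Finset.sum_inter_add_sum_sdiff T S g
  have hc : (S \ T).card = (T \ S).card := by
    have := Finset.card_inter_add_card_sdiff S T
    have := Finset.card_inter_add_card_sdiff T S
    rw [Finset.inter_comm T S] at this
    omega
  have key : ∑ i ∈ S \ T, g i ≤ ∑ i ∈ T \ S, g i := by
    refine sum_le_sum_of_forall_le g _ _ hc ?_
    intro a ha b hb
    have ha' : ¬ (n - k ≤ (a : ℕ)) := by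
      have := (Finset.mem_sdiff.1 ha).2
      simpa [hmemT] using this
    have hb' : n - k ≤ (b : ℕ) := (hmemT b).1 (Finset.mem_sdiff.1 hb).1
    exact hg (by omega : a ≤ b)
  rw [← h1, ← h2, Finset.inter_comm T S]
  linarith

lemma sum_le_psum {n : ℕ} (u : Fin n → ℝ) (k : ℕ) (S : Finset (Fin n))
    (hcard : S.card = (topIdx n k).card) :
    ∑ i ∈ S, u i ≤ psum (sortDesc u) k := by
  rw [psum_sortDesc_eq]
  set σ := Tuple.sort u
  have hS : ∑ i ∈ S.image σ.symm, u (σ i) = ∑ i ∈ S, u i := by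
    rw [Finset.sum_image (fun a _ b _ h => σ.symm.injective h)]
    simp
  rw [← hS]
  refine sum_le_sum_topIdx (fun i => u (σ i)) (Tuple.monotone_sort u) k _ ?_
  rw [Finset.card_image_of_injective _ σ.symm.injective, hcard]

lemma psum_attained {n : ℕ} (u : Fin n → ℝ) (k : ℕ) :
    ∃ S : Finset (Fin n), S.card = (topIdx n k).card ∧
      psum (sortDesc u) k = ∑ i ∈ S, u i := by
  set σ := Tuple.sort u
  refine ⟨(topIdx n k).image σ, Finset.card_image_of_injective _ σ.injective, ?_⟩
  rw [psum_sortDesc_eq, Finset.sum_image (fun a _ b _ h => σ.injective h)]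

lemma swap_psum_le {n : ℕ} (u v : Fin n → ℝ) (i j : Fin n) (hij : i ≠ j)
    (hsum : u i + u j = v i + v j)
    (hmaxi : u i ≤ max (v i) (v j)) (hmaxj : u j ≤ max (v i) (v j))
    (hother : ∀ l, l ≠ i → l ≠ j → u l = v l) :
    ∀ k, psum (sortDesc u) k ≤ psum (sortDesc v) k := by
  intro k
  obtain ⟨S, hScard, hSeq⟩ := psum_attained u k
  rw [hSeq]
  -- helper: replace one element's value
  by_cases hi : i ∈ S <;> by_cases hj : j ∈ S
  · -- both in S
    have : ∑ l ∈ S, u l = ∑ l ∈ S, v l := by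
      rw [← Finset.add_sum_erase S u hi, ← Finset.add_sum_erase S v hi,
          ← Finset.add_sum_erase _ u (Finset.mem_erase.2 ⟨Ne.symm hij, hj⟩),
          ← Finset.add_sum_erase _ v (Finset.mem_erase.2 ⟨Ne.symm hij, hj⟩)]
      have : ∑ l ∈ (S.erase i).erase j, u l = ∑ l ∈ (S.erase i).erase j, v l := by
        refine Finset.sum_congr rfl fun l hl => ?_
        have hl' := Finset.mem_erase.1 hl
        have hl'' := Finset.mem_erase.1 hl'.2
        exact hother l hl''.1 hl'.1
      rw [this]; linarith
    rw [this]; exact sum_le_psum v k S hScard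
  · -- i ∈ S, j ∉ S
    rcases le_max_iff.1 hmaxi with h | h
    · have : ∑ l ∈ S, u l ≤ ∑ l ∈ S, v l := by
        refine Finset.sum_le_sum fun l hl => ?_
        by_cases hli : l = i
        · subst hli; exact h
        · have hlj : l ≠ j := fun e => hj (e ▸ hl)
          exact le_of_eq (hother l hli hlj)
      exact this.trans (sum_le_psum v k S hScard)
    · -- u i ≤ v j; use S' = insert j (S.erase i)
      set S' := insert j (S.erase i) with hS'
      have hjS' : j ∉ S.erase i := fun e => hj (Finset.mem_of_mem_erase e)
      have hcard' : S'.card = (topIdx n k).card := by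
        rw [hS', Finset.card_insert_of_notMem hjS', Finset.card_erase_of_mem hi]
        have : 1 ≤ S.card := Finset.card_pos.2 ⟨i, hi⟩
        omega
      have : ∑ l ∈ S, u l ≤ ∑ l ∈ S', v l := by
        rw [hS', Finset.sum_insert hjS', ← Finset.add_sum_erase S u hi]
        have : ∑ l ∈ S.erase i, u l = ∑ l ∈ S.erase i, v l := by
          refine Finset.sum_congr rfl fun l hl => ?_
          have hl' := Finset.mem_erase.1 hl
          have hlj : l ≠ j := fun e => hj (e ▸ hl'.2)
          exact hother l hl'.1 hlj
        rw [this]; linarith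
      exact this.trans (sum_le_psum v k S' hcard')
  · -- j ∈ S, i ∉ S (symmetric)
    rcases le_max_iff.1 hmaxj with h | h
    · -- u j ≤ v i; use S' = insert i (S.erase j)
      set S' := insert i (S.erase j) with hS'
      have hiS' : i ∉ S.erase j := fun e => hi (Finset.mem_of_mem_erase e)
      have hcard' : S'.card = (topIdx n k).card := by
        rw [hS', Finset.card_insert_of_notMem hiS', Finset.card_erase_of_mem hj]
        have : 1 ≤ S.card := Finset.card_pos.2 ⟨j, hj⟩
        omega
      have : ∑ l ∈ S, u l ≤ ∑ l ∈ S', v l := by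
        rw [hS', Finset.sum_insert hiS', ← Finset.add_sum_erase S u hj]
        have : ∑ l ∈ S.erase j, u l = ∑ l ∈ S.erase j, v l := by
          refine Finset.sum_congr rfl fun l hl => ?_
          have hl' := Finset.mem_erase.1 hl
          have hli : l ≠ i := fun e => hi (e ▸ hl'.2)
          exact hother l hli hl'.1
        rw [this]; linarith
      exact this.trans (sum_le_psum v k S' hcard')
    · have : ∑ l ∈ S, u l ≤ ∑ l ∈ S, v l := by
        refine Finset.sum_le_sum fun l hl => ?_
        by_cases hlj : l = j
        · subst hlj; exact h
        · have hli : l ≠ i := fun e => hi (e ▸ hl)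
          exact le_of_eq (hother l hli hlj)
      exact this.trans (sum_le_psum v k S hScard)
  · -- neither
    have : ∑ l ∈ S, u l = ∑ l ∈ S, v l := by
      refine Finset.sum_congr rfl fun l hl => ?_
      exact hother l (fun e => hi (e ▸ hl)) (fun e => hj (e ▸ hl))
    rw [this]; exact sum_le_psum v k S hScard

noncomputable def Phi {n : ℕ} (y : Fin n → ℝ) : ℝ := ∑ i : Fin n, (i : ℝ) * y i

open scoped Classical in
noncomputable def meas {n : ℕ} (y : Fin n → ℝ) : ℕ :=
  ((univ : Finset (Equiv.Perm (Fin n))).filter (fun π : Equiv.Perm (Fin n) => Phi y < Phi (y ∘ ⇑π))).card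

lemma phi_swap_gt {n : ℕ} (y : Fin n → ℝ) (i j : Fin n) (hij : i < j) (hy : y j < y i) :
    Phi y < Phi (y ∘ (Equiv.swap i j)) := by
  set s := Equiv.swap i j
  have hne : i ≠ j := ne_of_lt hij
  have hdiff : Phi (y ∘ s) - Phi y = ∑ l : Fin n, ((l : ℝ) * y (s l) - (l : ℝ) * y l) := by
    rw [Phi, Phi, ← Finset.sum_sub_distrib]; rfl
  have hzero : ∀ l ∈ (univ : Finset (Fin n)), l ≠ i ∧ l ≠ j →
      (l : ℝ) * y (s l) - (l : ℝ) * y l = 0 := by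
    intro l _ ⟨hli, hlj⟩
    rw [show s l = l from Equiv.swap_apply_of_ne_of_ne hli hlj]
    ring
  have hsum := Finset.sum_eq_add_of_mem i j (Finset.mem_univ i) (Finset.mem_univ j) hne
    (fun l hl h => hzero l hl ⟨h.1, h.2⟩)
    (f := fun l : Fin n => (l : ℝ) * y (s l) - (l : ℝ) * y l)
  rw [hsum] at hdiff
  simp only [Equiv.swap_apply_left, Equiv.swap_apply_right, s] at hdiff
  have hij' : (i : ℝ) < (j : ℝ) := by exact_mod_cast hij
  nlinarith [hdiff]

open scoped Classical in
lemma meas_swap_lt {n : ℕ} (y : Fin n → ℝ) (s : Equiv.Perm (Fin n))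
    (hs : Phi y < Phi (y ∘ s)) : meas (y ∘ s) < meas y := by
  classical
  set F0 := ((univ : Finset (Equiv.Perm (Fin n))).filter (fun π : Equiv.Perm (Fin n) => Phi y < Phi (y ∘ ⇑π)))
  set F1 := ((univ : Finset (Equiv.Perm (Fin n))).filter (fun π : Equiv.Perm (Fin n) => Phi (y ∘ ⇑s) < Phi ((y ∘ ⇑s) ∘ ⇑π)))
  have himg : F1.image (fun π => s * π) ⊆ F0 := by
    intro ρ hρ
    obtain ⟨π, hπ, rfl⟩ := Finset.mem_image.1 hρ
    have hπ' := (Finset.mem_filter.1 hπ).2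
    have : (y ∘ s) ∘ π = y ∘ (s * π) := by
      funext x; simp [Equiv.Perm.mul_apply, Function.comp]
    rw [this] at hπ'
    exact Finset.mem_filter.2 ⟨Finset.mem_univ _, hs.trans hπ'⟩
  have hsF0 : s ∈ F0 := Finset.mem_filter.2 ⟨Finset.mem_univ _, hs⟩
  have hsnot : s ∉ F1.image (fun π => s * π) := by
    intro h
    obtain ⟨π, hπ, hπeq⟩ := Finset.mem_image.1 h
    have hπ1 : π = 1 := by
      have : s * π = s * 1 := by rw [hπeq, mul_one]
      exact mul_left_cancel this
    subst hπ1
    have hπ' := (Finset.mem_filter.1 hπ).2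
    simp at hπ'
  have hss : F1.image (fun π => s * π) ⊂ F0 :=
    Finset.ssubset_iff_of_subset himg |>.2 ⟨s, hsF0, hsnot⟩
  have hcard : F1.card = (F1.image (fun π => s * π)).card :=
    (Finset.card_image_of_injective _ (mul_right_injective s)).symm
  calc meas (y ∘ s) = F1.card := by
        unfold meas; congr 1
    _ = (F1.image (fun π => s * π)).card := hcard
    _ < F0.card := Finset.card_lt_card hss
    _ = meas y := by unfold meas; congr 1

lemma sortAsc_comp_perm {n : ℕ} (y : Fin n → ℝ) (s : Equiv.Perm (Fin n)) :
    sortAsc (y ∘ s) = sortAsc y := Tuple.comp_perm_comp_sort_eq_comp_sort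

lemma key {n : ℕ} (a : Fin n → ℝ) (ha : Antitone a) :
    ∀ N (y : Fin n → ℝ), meas y < N →
      ∀ k, psum (sortDesc fun i => a i + sortAsc y i) k ≤
           psum (sortDesc fun i => a i + y i) k := by
  intro N
  induction N with
  | zero => intro y h; omega
  | succ N ih =>
    intro y hy k
    by_cases hmono : Monotone y
    · have hs : sortAsc y = y := by
        unfold sortAsc
        rw [Tuple.sort_eq_refl_iff_monotone.2 hmono]
        rfl
      rw [hs]
    · simp only [Monotone, not_forall, not_le] at hmono
      obtain ⟨i, j, hij, hyij⟩ := hmono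
      have hij' : i < j := by
        rcases lt_or_eq_of_le hij with h | h
        · exact h
        · subst h; exact absurd hyij (lt_irrefl _)
      set s := Equiv.swap i j with hsdef
      have hphi := phi_swap_gt y i j hij' hyij
      have hmeas := meas_swap_lt y s hphi
      have step1 := ih (y ∘ s) (by omega) k
      rw [sortAsc_comp_perm y s] at step1
      refine le_trans (by exact step1) ?_
      have hsi : (y ∘ s) i = y j := by simp [hsdef]
      have hsj : (y ∘ s) j = y i := by simp [hsdef]
      refine swap_psum_le (fun l => a l + (y ∘ s) l) (fun l => a l + y l) i j
        (ne_of_lt hij') ?_ ?_ ?_ ?_ k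
      · simp only [hsi, hsj]; ring
      · simp only [hsi, hsj, le_max_iff, le_sup_iff]
        left; linarith [hyij.le]
      · simp only [hsi, hsj, le_max_iff, le_sup_iff]
        left; linarith [ha hij'.le]
      · intro l hli hlj
        have : s l = l := Equiv.swap_apply_of_ne_of_ne hli hlj
        simp [Function.comp, this]


theorem stmt_5 {n : ℕ} (x y : Fin n → ℝ) :
    Maj (fun i => sortDesc x i + sortAsc y i) (fun i => sortDesc x i + y i) := by
  constructor
  · have ha : Antitone (sortDesc x) := by
      intro i j h
      exact Tuple.monotone_sort x (Fin.rev_le_rev.2 h)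
    exact fun k => key (sortDesc x) ha (meas y + 1) y (Nat.lt_succ_self _) k
  · rw [Finset.sum_add_distrib, Finset.sum_add_distrib]
    congr 1
    exact Equiv.sum_comp (Tuple.sort y) y
end

section
/- Let x, y ∈ ℕ^n with x majorized by y, and let p, q ∈ {1,...,n} with p ≥ q. Then x↓ + e_p is majorized by y↓ + e_q, where e_i is the i-th standard basis vector and addition is componentwise. -/
open Finset

lemma sortAsc_comp_perm_s7 {n : ℕ} {α : Type*} [LinearOrder α] (f : Fin n → α)
    (σ : Equiv.Perm (Fin n)) : sortAsc (f ∘ σ) = sortAsc f :=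
  Tuple.comp_perm_comp_sort_eq_comp_sort

lemma sortDesc_antitone {n : ℕ} {α : Type*} [LinearOrder α] (f : Fin n → α) :
    Antitone (sortDesc f) := fun i j hij =>
  Tuple.monotone_sort f (Fin.rev_le_rev.mpr hij)

lemma sortDesc_comp_perm {n : ℕ} {α : Type*} [LinearOrder α] (f : Fin n → α)
    (σ : Equiv.Perm (Fin n)) : sortDesc (f ∘ σ) = sortDesc f := by
  funext i
  show sortAsc (f ∘ σ) i.rev = sortAsc f i.rev
  rw [sortAsc_comp_perm_s7]

lemma sortDesc_of_antitone {n : ℕ} {α : Type*} [LinearOrder α] {f : Fin n → α}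
    (hf : Antitone f) : sortDesc f = f := by
  have hmono : Monotone (f ∘ Fin.rev) := fun i j hij => hf (Fin.rev_le_rev.mpr hij)
  have hcomp : (f ∘ Fin.rev) ∘ (Fin.revPerm : Equiv.Perm (Fin n)) = f := by
    funext i; simp [Function.comp]
  have h2 : sortAsc f = f ∘ Fin.rev := by
    conv_lhs => rw [← hcomp]
    rw [sortAsc_comp_perm_s7]
    unfold sortAsc
    rw [Tuple.sort_eq_refl_iff_monotone.mpr hmono]
    rfl
  funext i
  show sortAsc f i.rev = f i
  rw [h2]
  simp [Function.comp]

lemma sum_sortDesc {n : ℕ} {α : Type*} [AddCommMonoid α] [LinearOrder α] (f : Fin n → α) :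
    ∑ i, sortDesc f i = ∑ i, f i := by
  have h : sortDesc f = fun i => f ((Fin.revPerm.trans (Tuple.sort f)) i) := rfl
  rw [h]
  exact Equiv.sum_comp (Fin.revPerm.trans (Tuple.sort f)) f

lemma psum_succ {n : ℕ} {α : Type*} [AddCommMonoid α] (f : Fin n → α) {k : ℕ} (hk : k < n) :
    psum f (k + 1) = psum f k + f ⟨k, hk⟩ := by
  have h1 : ∀ i : Fin n, (if (i : ℕ) < k + 1 then f i else 0)
      = (if (i : ℕ) < k then f i else 0) + (if i = (⟨k, hk⟩ : Fin n) then f i else 0) := by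
    intro i
    by_cases h : i = (⟨k, hk⟩ : Fin n)
    · subst h; simp
    · have hne : (i : ℕ) ≠ k := fun hc => h (Fin.ext hc)
      rw [if_neg h, add_zero]
      by_cases h2 : (i : ℕ) < k
      · rw [if_pos h2, if_pos (by omega)]
      · rw [if_neg h2, if_neg (by omega)]
  unfold psum
  rw [Finset.sum_congr rfl (fun i _ => h1 i), Finset.sum_add_distrib,
    Finset.sum_ite_eq' Finset.univ (⟨k, hk⟩ : Fin n) f]
  simp

lemma psum_add_single {n : ℕ} (f : Fin n → ℕ) (j : Fin n) (k : ℕ) :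
    psum (fun i => f i + if i = j then 1 else 0) k
      = psum f k + (if (j : ℕ) < k then 1 else 0) := by
  have h1 : ∀ i : Fin n, (if (i : ℕ) < k then (f i + if i = j then 1 else 0) else 0)
      = (if (i : ℕ) < k then f i else 0)
        + (if i = j then (if (j : ℕ) < k then 1 else 0) else 0) := by
    intro i
    by_cases h : i = j
    · subst h
      by_cases h2 : (i : ℕ) < k <;> simp [h2]
    · simp [h]
  unfold psum
  rw [Finset.sum_congr rfl (fun i _ => h1 i), Finset.sum_add_distrib,
    Finset.sum_ite_eq' Finset.univ j (fun _ => if (j : ℕ) < k then 1 else 0)]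
  simp

lemma exists_first_eq {n : ℕ} (a : Fin n → ℕ) (hA : Antitone a) (p : Fin n) :
    ∃ j : Fin n, j ≤ p ∧ a j = a p ∧ ∀ i, i < j → a p < a i := by
  classical
  have hne : (Finset.univ.filter (fun i => a i = a p)).Nonempty := ⟨p, by simp⟩
  refine ⟨(Finset.univ.filter (fun i => a i = a p)).min' hne, ?_, ?_, ?_⟩
  · exact Finset.min'_le _ p (by simp)
  · have := Finset.min'_mem _ hne; simpa using this
  · intro i hi
    have hnm : a i ≠ a p := by
      intro hc
      exact absurd (Finset.min'_le _ i (by simp [hc])) (not_le.mpr hi)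
    have hip : i ≤ p := le_trans hi.le (Finset.min'_le _ p (by simp))
    have := hA hip
    omega

lemma sortDesc_add_single {n : ℕ} (a : Fin n → ℕ) (hA : Antitone a) (p j : Fin n)
    (hjp : j ≤ p) (hj : a j = a p) (hjmin : ∀ i, i < j → a p < a i) :
    sortDesc (fun i => a i + if i = p then 1 else 0)
      = fun i => a i + if i = j then 1 else 0 := by
  have hA' : Antitone (fun i => a i + if i = j then 1 else 0) := by
    intro i i' hii'
    by_cases h1 : i' = j
    · subst h1
      by_cases h2 : i = i'
      · subst h2; exact le_refl _
      · have hlt : i < i' := lt_of_le_of_ne hii' h2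
        have h3 := hjmin i hlt
        show a i' + (if i' = i' then 1 else 0) ≤ a i + (if i = i' then 1 else 0)
        rw [if_pos rfl, if_neg h2]
        omega
    · have := hA hii'
      simp only [if_neg h1]
      split_ifs <;> omega
  have hperm : (fun i => a i + if i = p then 1 else 0) ∘ (Equiv.swap j p)
      = fun i => a i + if i = j then 1 else 0 := by
    funext i
    show a (Equiv.swap j p i) + (if Equiv.swap j p i = p then 1 else 0)
      = a i + if i = j then 1 else 0
    by_cases h1 : i = j
    · subst h1
      rw [Equiv.swap_apply_left, if_pos rfl, if_pos rfl, hj]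
    · by_cases h2 : i = p
      · subst h2
        rw [Equiv.swap_apply_right, hj, if_neg (fun hc => h1 hc.symm), if_neg h1]
      · rw [Equiv.swap_apply_of_ne_of_ne h1 h2, if_neg h2, if_neg h1]
  rw [← sortDesc_comp_perm _ (Equiv.swap j p), hperm, sortDesc_of_antitone hA']

lemma key_ne {n : ℕ} (a b : Fin n → ℕ) (hA : Antitone a) (hB : Antitone b)
    (hab : ∀ k, psum a k ≤ psum b k)
    (p q ja jb : Fin n) (hqp : q ≤ p)
    (hjap : ja ≤ p) (haj : a ja = a p)
    (hjbq : jb ≤ q) (hbj : b jb = b q) (hjbmin : ∀ i, i < jb → b q < b i) :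
    ∀ m k, (ja : ℕ) < k → k ≤ (jb : ℕ) → (jb : ℕ) - k = m → psum a k ≠ psum b k := by
  have haconst : ∀ i : Fin n, ja ≤ i → i ≤ p → a i = a p := fun i hi1 hi2 =>
    le_antisymm (haj ▸ hA hi1) (hA hi2)
  have hqn : (jb : ℕ) ≤ (q : ℕ) := Fin.le_def.mp hjbq
  have hpn : (q : ℕ) ≤ (p : ℕ) := Fin.le_def.mp hqp
  have hmain : ∀ k, (ja : ℕ) < k → k ≤ (jb : ℕ) → psum a k = psum b k →
      k < (jb : ℕ) ∧ psum a (k + 1) = psum b (k + 1) := by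
    intro k hk1 hk2 heq
    obtain ⟨k', rfl⟩ : ∃ k', k = k' + 1 := ⟨k - 1, by omega⟩
    have hkn : k' + 1 < n := lt_of_le_of_lt hk2 jb.isLt
    have hk'n : k' < n := by omega
    have e1 : psum a (k' + 1 + 1) = psum a (k' + 1) + a ⟨k' + 1, hkn⟩ := psum_succ a hkn
    have e2 : psum b (k' + 1 + 1) = psum b (k' + 1) + b ⟨k' + 1, hkn⟩ := psum_succ b hkn
    have e3 : psum a (k' + 1) = psum a k' + a ⟨k', hk'n⟩ := psum_succ a hk'n
    have e4 : psum b (k' + 1) = psum b k' + b ⟨k', hk'n⟩ := psum_succ b hk'n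
    have i1 := hab (k' + 1 + 1)
    have i2 := hab k'
    have hub : a ⟨k' + 1, hkn⟩ ≤ b ⟨k' + 1, hkn⟩ := by omega
    have hlb : b ⟨k', hk'n⟩ ≤ a ⟨k', hk'n⟩ := by omega
    have hja' : (ja : ℕ) ≤ k' := by omega
    have hap1 : a ⟨k', hk'n⟩ = a p :=
      haconst _ (Fin.le_def.mpr (by simpa using hja')) (Fin.le_def.mpr (by simp; omega))
    have hap2 : a ⟨k' + 1, hkn⟩ = a p :=
      haconst _ (Fin.le_def.mpr (by simp; omega)) (Fin.le_def.mpr (by simp; omega))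
    have hbb : b ⟨k' + 1, hkn⟩ ≤ b ⟨k', hk'n⟩ := hB (Fin.le_def.mpr (by simp))
    have hbk : b ⟨k' + 1, hkn⟩ = a p := by omega
    have hbk' : b ⟨k', hk'n⟩ = a p := by omega
    constructor
    · rcases lt_or_eq_of_le hk2 with h | h
      · exact h
      · exfalso
        have hjbeq : (⟨k' + 1, hkn⟩ : Fin n) = jb := Fin.ext h
        have hbq : b q = a p := by rw [← hbj, ← hjbeq]; exact hbk
        have hlt := hjbmin ⟨k', hk'n⟩ (Fin.lt_def.mpr (by simp; omega))
        omega
    · omega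
  intro m
  induction m with
  | zero =>
      intro k hk1 hk2 hk3 heq
      obtain ⟨hlt, _⟩ := hmain k hk1 hk2 heq
      omega
  | succ m ih =>
      intro k hk1 hk2 hk3 heq
      obtain ⟨hlt, heq'⟩ := hmain k hk1 hk2 heq
      exact ih (k + 1) (by omega) (by omega) (by omega) heq'

theorem stmt_7 {n : ℕ} (x y : Fin n → ℕ) (h : Maj x y) (p q : Fin n) (hqp : q ≤ p) :
    Maj (fun i => sortDesc x i + if i = p then 1 else 0)
        (fun i => sortDesc y i + if i = q then 1 else 0) := by
  obtain ⟨h1, h2⟩ := h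
  have haA : Antitone (sortDesc x) := sortDesc_antitone x
  have hbA : Antitone (sortDesc y) := sortDesc_antitone y
  obtain ⟨ja, hjap, haj, hjamin⟩ := exists_first_eq (sortDesc x) haA p
  obtain ⟨jb, hjbq, hbj, hjbmin⟩ := exists_first_eq (sortDesc y) hbA q
  constructor
  · intro k
    rw [sortDesc_add_single _ haA p ja hjap haj hjamin,
        sortDesc_add_single _ hbA q jb hjbq hbj hjbmin,
        psum_add_single, psum_add_single]
    have h0 := h1 k
    split_ifs with ht1 ht2
    · omega
    · have hne := key_ne (sortDesc x) (sortDesc y) haA hbA h1 p q ja jb hqp hjap haj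
        hjbq hbj hjbmin ((jb : ℕ) - k) k ht1 (by omega) rfl
      omega
    · omega
    · omega
  · rw [Finset.sum_add_distrib, Finset.sum_add_distrib, sum_sortDesc, sum_sortDesc, h2]
    congr 1
    rw [Finset.sum_ite_eq' Finset.univ p (fun _ => 1),
        Finset.sum_ite_eq' Finset.univ q (fun _ => 1)]
    simp
end

section
/- Let r ∈ ℕ^m and c ∈ ℕ^n. The weak supermajorization c ≺^w r* holds if and only if the weak submajorization r ≺_w c* holds, where v* denotes the partition conjugate of v. -/
open Finset

/-- Partition conjugate of `r ∈ ℕ^m`, taken with dimension `n`: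
its `j`-th entry (1-indexed `j+1`) counts the indices `i` with `r i ≥ j+1`. -/
def conj {m : ℕ} (r : Fin m → ℕ) (n : ℕ) : Fin n → ℕ :=
  fun j => (Finset.univ.filter fun i => (j : ℕ) + 1 ≤ r i).card


section DualityHelpers

open Finset

variable {N : ℕ}

lemma psum_filter (f : Fin N → ℕ) (k : ℕ) :
    psum f k = ∑ i ∈ univ.filter (fun i : Fin N => (i : ℕ) < k), f i :=
  (Finset.sum_filter _ _).symm

lemma card_filter_lt (t : ℕ) :
    (univ.filter fun j : Fin N => (j : ℕ) < t).card = min t N := by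
  rw [Finset.card_filter, Fin.sum_univ_eq_sum_range (fun j => if j < t then 1 else 0),
    ← Finset.card_filter]
  have : (Finset.range N).filter (· < t) = Finset.range (min t N) := by
    ext a; simp [Nat.lt_min]; omega
  rw [this, Finset.card_range]

lemma sortAsc_sum (x : Fin N → ℕ) : ∑ i, sortAsc x i = ∑ i, x i := by
  simpa [sortAsc] using Equiv.sum_comp (Tuple.sort x) x

lemma monotone_sortAsc (x : Fin N → ℕ) : Monotone (sortAsc x) :=
  Tuple.monotone_sort x

lemma antitone_sortDesc (x : Fin N → ℕ) : Antitone (sortDesc x) := by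
  intro i j hij
  exact monotone_sortAsc x (Fin.rev_le_rev.mpr hij)

lemma psum_eq_total (f : Fin N → ℕ) {k : ℕ} (hk : N ≤ k) : psum f k = ∑ i, f i :=
  Finset.sum_congr rfl fun i _ => if_pos (lt_of_lt_of_le i.isLt hk)

lemma psum_zero (f : Fin N → ℕ) : psum f 0 = 0 := by
  simp [psum]

lemma antitone_conj {M : ℕ} (x : Fin M → ℕ) (K : ℕ) : Antitone (conj x K) := by
  intro j j' h
  apply Finset.card_le_card
  apply Finset.monotone_filter_right
  intro i hi
  have : (j : ℕ) ≤ (j' : ℕ) := h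
  omega

lemma sortDesc_of_antitone_s11 (x : Fin N → ℕ) (hx : Antitone x) : sortDesc x = x := by
  have h1 : x ∘ ⇑(Fin.revPerm : Equiv.Perm (Fin N)) = sortAsc x := by
    rw [sortAsc]
    exact Tuple.comp_sort_eq_comp_iff_monotone.mpr
      (fun a b hab => hx (by simpa using Fin.rev_le_rev.mpr hab))
  funext i
  have := congrFun h1 i.rev
  simp only [Function.comp, Fin.revPerm_apply, Fin.rev_rev] at this
  simp [sortDesc, ← this]

lemma psum_conj {M K : ℕ} (x : Fin M → ℕ) (hx : ∀ i, x i ≤ K) (k : ℕ) :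
    psum (conj x K) k = ∑ i, min (x i) k := by
  rw [psum]
  have step : ∀ j : Fin K, (if (j : ℕ) < k then conj x K j else 0)
      = ∑ i : Fin M, (if ((j : ℕ) < k ∧ (j : ℕ) + 1 ≤ x i) then 1 else 0) := by
    intro j
    by_cases h : (j : ℕ) < k
    · rw [if_pos h, conj, Finset.card_filter]
      exact Finset.sum_congr rfl fun i _ => by simp [h]
    · simp [h]
  rw [Finset.sum_congr rfl (fun j _ => step j), Finset.sum_comm]
  refine Finset.sum_congr rfl fun i _ => ?_
  have hiff : ∀ j : Fin K, ((j : ℕ) < k ∧ (j : ℕ) + 1 ≤ x i) ↔ (j : ℕ) < min k (x i) :=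
    fun j => by omega
  calc (∑ j : Fin K, if ((j : ℕ) < k ∧ (j : ℕ) + 1 ≤ x i) then 1 else 0)
      = (univ.filter fun j : Fin K => (j : ℕ) < min k (x i)).card := by
        rw [Finset.card_filter]
        exact Finset.sum_congr rfl fun j _ => if_congr (hiff j) rfl rfl
    _ = min (min k (x i)) K := card_filter_lt _
    _ = min (x i) k := by have := hx i; omega

lemma psum_asc_add (x : Fin N → ℕ) {k : ℕ} (hk : k ≤ N) :
    psum (sortAsc x) k + psum (sortDesc x) (N - k) = ∑ i, x i := by
  have hrev : psum (sortDesc x) (N - k)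
      = ∑ i : Fin N, if ((i.rev : ℕ) < N - k) then sortAsc x i else 0 := by
    rw [psum, ← Equiv.sum_comp (Fin.revPerm : Equiv.Perm (Fin N))
      (fun i : Fin N => if ((i.rev : ℕ) < N - k) then sortAsc x i else 0)]
    refine Finset.sum_congr rfl fun i _ => ?_
    simp [sortDesc, Fin.rev_rev]
  rw [psum, hrev, ← Finset.sum_add_distrib, ← sortAsc_sum x]
  refine Finset.sum_congr rfl fun i _ => ?_
  have h1 : (i.rev : ℕ) = N - (i + 1) := Fin.val_rev i
  have h2 := i.isLt
  by_cases h : (i : ℕ) < k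
  · rw [if_pos h, if_neg (by omega), add_zero]
  · rw [if_neg h, if_pos (by omega), zero_add]

lemma strictMono_val_le {s : ℕ} {f : Fin s → Fin N} (hf : StrictMono f) (a : Fin s) :
    (a : ℕ) ≤ (f a : ℕ) := by
  obtain ⟨v, hv⟩ := a
  induction v with
  | zero => exact Nat.zero_le _
  | succ t ih =>
    have ht : t < s := Nat.lt_of_succ_lt hv
    have h2 : f ⟨t, ht⟩ < f ⟨t + 1, hv⟩ := hf (by simp [Fin.mk_lt_mk])
    have h3 := ih ht
    simp only [Fin.lt_def, Fin.val_mk] at h2 h3 ⊢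
    omega

lemma psum_eq_sum_castLE (y : Fin N → ℕ) {s : ℕ} (hsN : s ≤ N) :
    psum y s = ∑ a : Fin s, y (Fin.castLE hsN a) := by
  rw [psum_filter]
  have himg : (univ : Finset (Fin s)).image (Fin.castLE hsN)
      = univ.filter (fun i : Fin N => (i : ℕ) < s) := by
    ext i
    simp only [Finset.mem_image, Finset.mem_univ, true_and, Finset.mem_filter, Fin.ext_iff]
    constructor
    · rintro ⟨a, ha⟩
      have : (a : ℕ) = (i : ℕ) := ha
      exact this ▸ a.isLt
    · intro h
      exact ⟨⟨(i : ℕ), h⟩, rfl⟩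
  rw [← himg, Finset.sum_image (fun a _ b _ h => Fin.castLE_injective hsN h)]

lemma sum_le_psum_of_antitone {y : Fin N → ℕ} (hy : Antitone y) (S : Finset (Fin N)) :
    ∑ i ∈ S, y i ≤ psum y S.card := by
  have hsN : S.card ≤ N := by simpa using Finset.card_le_univ S
  have himg : (univ : Finset (Fin S.card)).image (S.orderEmbOfFin rfl) = S := by
    apply Finset.coe_injective
    rw [Finset.coe_image, Finset.coe_univ, Set.image_univ, Finset.range_orderEmbOfFin]
  have hsum : ∑ i ∈ S, y i = ∑ a : Fin S.card, y (S.orderEmbOfFin rfl a) := by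
    conv_lhs => rw [← himg]
    exact Finset.sum_image (fun a _ b _ h => (S.orderEmbOfFin rfl).injective h)
  rw [hsum, psum_eq_sum_castLE y hsN]
  apply Finset.sum_le_sum
  intro a _
  apply hy
  rw [Fin.le_def]
  simpa using strictMono_val_le (S.orderEmbOfFin rfl).strictMono a

lemma sum_le_psum_sortDesc (x : Fin N → ℕ) (S : Finset (Fin N)) :
    ∑ i ∈ S, x i ≤ psum (sortDesc x) S.card := by
  classical
  set g : Fin N → Fin N := fun i => ((Tuple.sort x).symm i).rev with hg
  have hginj : Function.Injective g := fun a b h =>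
    (Equiv.injective _) (Fin.rev_injective h)
  have hcard : (S.image g).card = S.card := Finset.card_image_of_injective S hginj
  have hsum : ∑ j ∈ S.image g, sortDesc x j = ∑ i ∈ S, x i := by
    rw [Finset.sum_image (fun a _ b _ h => hginj h)]
    refine Finset.sum_congr rfl fun i _ => ?_
    simp [hg, sortDesc, sortAsc, Fin.rev_rev]
  calc ∑ i ∈ S, x i = ∑ j ∈ S.image g, sortDesc x j := hsum.symm
    _ ≤ psum (sortDesc x) (S.image g).card := sum_le_psum_of_antitone (antitone_sortDesc x) _
    _ = psum (sortDesc x) S.card := by rw [hcard]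

lemma psum_sortDesc_eq_sum (x : Fin N → ℕ) (k : ℕ) :
    ∃ T : Finset (Fin N), T.card = min k N ∧ psum (sortDesc x) k = ∑ i ∈ T, x i := by
  classical
  set g : Fin N → Fin N := fun j => Tuple.sort x j.rev with hg
  have hginj : Function.Injective g := fun a b h =>
    Fin.rev_injective ((Equiv.injective _) h)
  refine ⟨(univ.filter fun j : Fin N => (j : ℕ) < k).image g, ?_, ?_⟩
  · rw [Finset.card_image_of_injective _ hginj, card_filter_lt]
  · rw [Finset.sum_image (fun a _ b _ h => hginj h), psum_filter]
    refine Finset.sum_congr rfl fun j _ => ?_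
    simp [hg, sortDesc, sortAsc]

end DualityHelpers

theorem stmt_11 {m n : ℕ} (r : Fin m → ℕ) (c : Fin n → ℕ)
    (hr : ∀ i, r i ≤ n) (hc : ∀ j, c j ≤ m) :
    WeakSuper c (conj r n) ↔ WeakSub r (conj c m) := by
  classical
  -- Totals
  have htotal : ∑ j, conj r n j = ∑ i, r i := by
    rw [← psum_eq_total (conj r n) (le_refl n), psum_conj r hr n]
    exact Finset.sum_congr rfl fun i _ => by have := hr i; omega
  have hdesconj : ∀ t, psum (sortDesc (conj r n)) t = ∑ i, min (r i) t := fun t => by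
    rw [sortDesc_of_antitone_s11 _ (antitone_conj r n), psum_conj r hr t]
  -- Reformulation of WeakSub
  have hBiff : WeakSub r (conj c m) ↔ ∀ k : ℕ, psum (sortDesc r) k ≤ ∑ j, min (c j) k := by
    have key : ∀ k, psum (sortDesc (conj c m)) k = ∑ j, min (c j) k := fun k => by
      rw [sortDesc_of_antitone_s11 _ (antitone_conj c m), psum_conj c hc k]
    unfold WeakSub
    exact forall_congr' fun k => by rw [key k]
  -- Reformulation of WeakSuper
  have hAiff : WeakSuper c (conj r n) ↔
      ∀ l ≤ n, (∑ i, (r i - l)) + psum (sortDesc c) l ≤ ∑ j, c j := by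
    constructor
    · intro h l hl
      have hnl : n - (n - l) = l := by omega
      have e1 : psum (sortAsc (conj r n)) (n - l) + (∑ i, min (r i) l) = ∑ i, r i := by
        have h0 := psum_asc_add (conj r n) (Nat.sub_le n l)
        rw [hnl, hdesconj l, htotal] at h0
        exact h0
      have e2 : psum (sortAsc c) (n - l) + psum (sortDesc c) l = ∑ j, c j := by
        have h0 := psum_asc_add c (Nat.sub_le n l)
        rw [hnl] at h0
        exact h0
      have e3 : (∑ i, min (r i) l) + (∑ i, (r i - l)) = ∑ i, r i := by
        rw [← Finset.sum_add_distrib]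
        exact Finset.sum_congr rfl fun i _ => by omega
      have h4 := h (n - l)
      omega
    · intro h k
      by_cases hk : k ≤ n
      · have hnk : n - (n - k) = k := by omega
        have e1 : psum (sortAsc (conj r n)) k + (∑ i, min (r i) (n - k)) = ∑ i, r i := by
          have h0 := psum_asc_add (conj r n) hk
          rw [hdesconj (n - k), htotal] at h0
          exact h0
        have e2 : psum (sortAsc c) k + psum (sortDesc c) (n - k) = ∑ j, c j := by
          exact psum_asc_add c hk
        have e3 : (∑ i, min (r i) (n - k)) + (∑ i, (r i - (n - k))) = ∑ i, r i := by
          rw [← Finset.sum_add_distrib]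
          exact Finset.sum_congr rfl fun i _ => by omega
        have h4 := h (n - k) (Nat.sub_le n k)
        omega
      · have h0 := h 0 (Nat.zero_le n)
        rw [psum_zero] at h0
        have e0 : ∑ i, (r i - 0) = ∑ i, r i :=
          Finset.sum_congr rfl fun i _ => by omega
        rw [psum_eq_total (sortAsc (conj r n)) (by omega),
          psum_eq_total (sortAsc c) (by omega), sortAsc_sum, sortAsc_sum, htotal]
        omega
  rw [hAiff, hBiff]
  constructor
  · -- A' → B'
    intro hA k
    obtain ⟨T, hTcard, hTsum⟩ := psum_sortDesc_eq_sum r k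
    set S := univ.filter (fun j : Fin n => k ≤ c j) with hS
    have hl : S.card ≤ n := by simpa using Finset.card_le_univ S
    have hSsum : ∑ j ∈ S, c j = S.card * k + ∑ j, (c j - k) := by
      have h1 : ∑ j ∈ S, c j = ∑ j ∈ S, (k + (c j - k)) :=
        Finset.sum_congr rfl fun j hj => by
          have := (Finset.mem_filter.mp hj).2; omega
      have h2 : ∑ j ∈ S, (c j - k) = ∑ j, (c j - k) :=
        Finset.sum_subset (Finset.subset_univ S) (fun j _ hj => by
          simp only [hS, Finset.mem_filter, Finset.mem_univ, true_and, not_le] at hj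
          omega)
      rw [h1, Finset.sum_add_distrib, Finset.sum_const, smul_eq_mul, h2]
    have hSle : ∑ j ∈ S, c j ≤ psum (sortDesc c) S.card := sum_le_psum_sortDesc c S
    have hA' := hA S.card hl
    have hTk : T.card ≤ k := by omega
    have hT : ∑ i ∈ T, r i ≤ T.card * S.card + ∑ i, (r i - S.card) := by
      calc ∑ i ∈ T, r i ≤ ∑ i ∈ T, (S.card + (r i - S.card)) :=
            Finset.sum_le_sum fun i _ => by omega
        _ = T.card * S.card + ∑ i ∈ T, (r i - S.card) := by
            rw [Finset.sum_add_distrib, Finset.sum_const, smul_eq_mul]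
        _ ≤ T.card * S.card + ∑ i, (r i - S.card) :=
            Nat.add_le_add_left (Finset.sum_le_sum_of_subset (Finset.subset_univ T)) _
    have hmul : T.card * S.card ≤ S.card * k := by
      rw [Nat.mul_comm S.card k]
      exact Nat.mul_le_mul_right _ hTk
    have hmin : (∑ j, min (c j) k) + ∑ j, (c j - k) = ∑ j, c j := by
      rw [← Finset.sum_add_distrib]
      exact Finset.sum_congr rfl fun j _ => by omega
    rw [hTsum]
    omega
  · -- B' → A'
    intro hB l hl
    set S := univ.filter (fun i : Fin m => l + 1 ≤ r i) with hS
    have hSsum : (∑ i, (r i - l)) + S.card * l = ∑ i ∈ S, r i := by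
      have h1 : ∑ i, (r i - l) = ∑ i ∈ S, (r i - l) :=
        (Finset.sum_subset (Finset.subset_univ S) (fun i _ hi => by
          simp only [hS, Finset.mem_filter, Finset.mem_univ, true_and, not_le] at hi
          omega)).symm
      rw [h1, ← smul_eq_mul, ← Finset.sum_const, ← Finset.sum_add_distrib]
      exact Finset.sum_congr rfl fun i hi => by
        have := (Finset.mem_filter.mp hi).2; omega
    have hSle : ∑ i ∈ S, r i ≤ psum (sortDesc r) S.card := sum_le_psum_sortDesc r S
    have hB' := hB S.card
    obtain ⟨T, hTcard, hTsum⟩ := psum_sortDesc_eq_sum c l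
    have hTcard' : T.card = l := by omega
    have hTle : ∑ j ∈ T, c j ≤ l * S.card + ∑ j, (c j - S.card) := by
      calc ∑ j ∈ T, c j ≤ ∑ j ∈ T, (S.card + (c j - S.card)) :=
            Finset.sum_le_sum fun j _ => by omega
        _ = T.card * S.card + ∑ j ∈ T, (c j - S.card) := by
            rw [Finset.sum_add_distrib, Finset.sum_const, smul_eq_mul]
        _ ≤ l * S.card + ∑ j, (c j - S.card) := by
            rw [hTcard']
            exact Nat.add_le_add_left (Finset.sum_le_sum_of_subset (Finset.subset_univ T)) _
    have hmin : (∑ j, min (c j) S.card) + ∑ j, (c j - S.card) = ∑ j, c j := by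
      rw [← Finset.sum_add_distrib]
      exact Finset.sum_congr rfl fun j _ => by omega
    have hcomm : S.card * l = l * S.card := Nat.mul_comm _ _
    rw [hTsum]
    omega
end

section
/- Given r ∈ ℕ^m and c ∈ ℕ^n, there exists an m×n (0,1)-matrix A with row sums exactly r_i for each i and column sums at most c_j for each j if and only if c is weakly supermajorized by r*, the partition conjugate of r. -/
open Finset

lemma card_filter_le_val (N a : ℕ) :
    (univ.filter fun j : Fin N => a ≤ (j : ℕ)).card = N - a := by
  rw [← Nat.card_Ico a N]
  refine Finset.card_bij (fun j _ => (j : ℕ)) ?_ ?_ ?_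
  · intro j hj
    simp only [mem_filter, mem_univ, true_and] at hj
    exact Finset.mem_Ico.mpr ⟨hj, j.isLt⟩
  · intro j1 _ j2 _ h; exact Fin.ext h
  · intro b hb
    rw [Finset.mem_Ico] at hb
    exact ⟨⟨b, hb.2⟩, by simp [hb.1], rfl⟩

lemma card_filter_val_lt (N a : ℕ) (h : a ≤ N) :
    (univ.filter fun j : Fin N => (j : ℕ) < a).card = a := by
  have hh : (univ.filter fun j : Fin N => (j : ℕ) < a).card = (Finset.range a).card := by
    refine Finset.card_bij (fun j _ => (j : ℕ)) ?_ ?_ ?_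
    · intro j hj
      simp only [mem_filter, mem_univ, true_and] at hj
      exact Finset.mem_range.mpr hj
    · intro j1 _ j2 _ hhh; exact Fin.ext hhh
    · intro b hb
      rw [Finset.mem_range] at hb
      exact ⟨⟨b, lt_of_lt_of_le hb h⟩, by simp [hb], rfl⟩
  rw [hh, Finset.card_range]

lemma psum_eq_sum_filter {n : ℕ} (f : Fin n → ℕ) (k : ℕ) :
    psum f k = ∑ i ∈ univ.filter (fun i : Fin n => (i : ℕ) < k), f i := by
  rw [psum, Finset.sum_filter]

lemma strictMono_le_val {k n : ℕ} (v : Fin k → Fin n) (hv : StrictMono v) :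
    ∀ i : Fin k, (i : ℕ) ≤ (v i : ℕ) := by
  intro i
  induction' hi : (i : ℕ) with t ih generalizing i
  · exact Nat.zero_le _
  · have ht : t < k := by omega
    have := ih ⟨t, ht⟩ rfl
    have hlt : (⟨t, ht⟩ : Fin k) < i := by simp [Fin.lt_def, hi]
    have := hv hlt
    rw [Fin.lt_def] at this
    omega

lemma psum_le_sum {n : ℕ} (g : Fin n → ℕ) (hg : Monotone g) (T : Finset (Fin n)) (k : ℕ)
    (hk : k ≤ T.card) : psum g k ≤ ∑ i ∈ T, g i := by
  rcases Nat.eq_zero_or_pos k with hk0 | hk0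
  · simp [psum, hk0]
  obtain ⟨T', hT'sub, hT'card⟩ := Finset.exists_subset_card_eq hk
  set ι := T'.orderEmbOfFin hT'card with hι
  have hmem : ∀ i : Fin k, ι i ∈ T' := fun i => Finset.orderEmbOfFin_mem T' hT'card i
  have hle : ∀ i : Fin k, (i : ℕ) ≤ (ι i : ℕ) :=
    strictMono_le_val (fun i => ι i) ι.strictMono
  set F : Fin n → Fin n := fun j => ι ⟨j.val % k, Nat.mod_lt _ hk0⟩ with hF
  rw [psum_eq_sum_filter]
  have h1 : ∑ j ∈ univ.filter (fun i : Fin n => (i : ℕ) < k), g j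
      ≤ ∑ j ∈ univ.filter (fun i : Fin n => (i : ℕ) < k), g (F j) := by
    apply Finset.sum_le_sum
    intro j hj
    simp only [mem_filter, mem_univ, true_and] at hj
    apply hg
    rw [Fin.le_def]
    simp only [hF]
    calc (j : ℕ) = (j : ℕ) % k := (Nat.mod_eq_of_lt hj).symm
    _ ≤ _ := by
      have h2 := hle ⟨(j : ℕ) % k, Nat.mod_lt _ hk0⟩
      simpa using h2
  have h2 : ∑ j ∈ univ.filter (fun i : Fin n => (i : ℕ) < k), g (F j)
      = ∑ j ∈ (univ.filter (fun i : Fin n => (i : ℕ) < k)).image F, g j := by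
    rw [Finset.sum_image]
    intro a ha b hb hab
    simp only [mem_coe, mem_filter, mem_univ, true_and] at ha hb
    have := ι.injective hab
    have : (a : ℕ) % k = (b : ℕ) % k := congrArg Fin.val this
    rw [Nat.mod_eq_of_lt ha, Nat.mod_eq_of_lt hb] at this
    exact Fin.ext this
  have h3 : (univ.filter (fun i : Fin n => (i : ℕ) < k)).image F ⊆ T := by
    intro j hj
    simp only [Finset.mem_image] at hj
    obtain ⟨a, _, rfl⟩ := hj
    exact hT'sub (hmem _)
  calc _ ≤ _ := h1
  _ = _ := h2
  _ ≤ _ := Finset.sum_le_sum_of_subset h3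

lemma psum_sortAsc_le_sum {n : ℕ} (x : Fin n → ℕ) (S : Finset (Fin n)) (k : ℕ)
    (hk : k ≤ S.card) : psum (sortAsc x) k ≤ ∑ j ∈ S, x j := by
  set σ := Tuple.sort x with hσ
  have h1 : ∑ j ∈ S, x j = ∑ i ∈ S.image σ.symm, x (σ i) := by
    rw [Finset.sum_image (fun a _ b _ h => σ.symm.injective h)]
    simp
  rw [h1]
  exact psum_le_sum (x ∘ σ) (Tuple.monotone_sort x) _ k
    (by rwa [Finset.card_image_of_injective _ σ.symm.injective])

lemma psum_sortAsc_exists {n : ℕ} (x : Fin n → ℕ) (k : ℕ) (hk : k ≤ n) :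
    ∃ S : Finset (Fin n), S.card = k ∧ psum (sortAsc x) k = ∑ j ∈ S, x j := by
  set σ := Tuple.sort x with hσ
  refine ⟨(univ.filter (fun i : Fin n => (i : ℕ) < k)).image σ, ?_, ?_⟩
  · rw [Finset.card_image_of_injective _ σ.injective, card_filter_val_lt n k hk]
  · rw [psum_eq_sum_filter, Finset.sum_image (fun a _ b _ h => σ.injective h)]
    rfl

lemma psum_sortAsc_of_min {n : ℕ} (x : Fin n → ℕ) (T : Finset (Fin n)) (k : ℕ)
    (hcard : T.card = k)
    (hmin : ∀ j ∈ T, ∀ j' ∉ T, x j ≤ x j') :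
    psum (sortAsc x) k = ∑ j ∈ T, x j := by
  refine le_antisymm (psum_sortAsc_le_sum x T k hcard.ge) ?_
  have hk : k ≤ n := hcard ▸ (by simpa using Finset.card_le_univ T)
  obtain ⟨S, hScard, hSsum⟩ := psum_sortAsc_exists x k hk
  rw [hSsum]
  have hc : (T \ S).card = (S \ T).card := Finset.card_sdiff_comm (by rw [hcard, hScard])
  set e := Finset.equivOfCardEq hc with he
  have hdiff : ∑ j ∈ T \ S, x j ≤ ∑ j ∈ S \ T, x j := by
    rw [← Finset.sum_coe_sort (T \ S) x, ← Finset.sum_coe_sort (S \ T) x,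
      ← Equiv.sum_comp e (fun b : {j // j ∈ S \ T} => x b)]
    apply Finset.sum_le_sum
    intro a _
    have ha : (a : Fin n) ∈ T := (Finset.mem_sdiff.mp a.2).1
    have hb : ((e a : {j // j ∈ S \ T}) : Fin n) ∉ T := (Finset.mem_sdiff.mp (e a).2).2
    exact hmin _ ha _ hb
  calc ∑ j ∈ T, x j = ∑ j ∈ T ∩ S, x j + ∑ j ∈ T \ S, x j :=
        (Finset.sum_inter_add_sum_sdiff T S x).symm
  _ ≤ ∑ j ∈ S ∩ T, x j + ∑ j ∈ S \ T, x j := by rw [Finset.inter_comm]; exact Nat.add_le_add le_rfl hdiff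
  _ = ∑ j ∈ S, x j := Finset.sum_inter_add_sum_sdiff S T x

lemma psum_of_le {n : ℕ} (f : Fin n → ℕ) (k : ℕ) (h : n ≤ k) : psum f k = ∑ i, f i := by
  unfold psum
  apply Finset.sum_congr rfl
  intro i _
  rw [if_pos (lt_of_lt_of_le i.isLt h)]

lemma card_filter_Ico (N a b : ℕ) (h : b ≤ N) :
    (univ.filter fun j : Fin N => a ≤ (j : ℕ) ∧ (j : ℕ) < b).card = b - a := by
  rw [← Nat.card_Ico a b]
  refine Finset.card_bij (fun j _ => (j : ℕ)) ?_ ?_ ?_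
  · intro j hj
    simp only [mem_filter, mem_univ, true_and] at hj
    exact Finset.mem_Ico.mpr hj
  · intro j1 _ j2 _ hh; exact Fin.ext hh
  · intro x hx
    rw [Finset.mem_Ico] at hx
    exact ⟨⟨x, lt_of_lt_of_le hx.2 h⟩, by simp [hx.1, hx.2], rfl⟩

lemma sum_conj_tail {m n : ℕ} (r : Fin m → ℕ) (hr : ∀ i, r i ≤ n) (k : ℕ) :
    ∑ j ∈ univ.filter (fun j : Fin n => n - k ≤ (j : ℕ)), conj r n j
      = ∑ i, (r i - (n - k)) := by
  have h1 : ∀ j : Fin n, conj r n j = ∑ i : Fin m, if (j : ℕ) + 1 ≤ r i then 1 else 0 := by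
    intro j
    rw [conj, Finset.card_filter]
  calc ∑ j ∈ univ.filter (fun j : Fin n => n - k ≤ (j : ℕ)), conj r n j
      = ∑ j : Fin n, if n - k ≤ (j : ℕ) then (∑ i : Fin m, if (j : ℕ) + 1 ≤ r i then 1 else 0) else 0 := by
        rw [← Finset.sum_filter]
        exact Finset.sum_congr rfl fun j _ => h1 j
    _ = ∑ i : Fin m, ∑ j : Fin n, (if n - k ≤ (j : ℕ) ∧ (j : ℕ) < r i then 1 else 0) := by
        rw [Finset.sum_comm]
        apply Finset.sum_congr rfl
        intro j _
        by_cases hj : n - k ≤ (j : ℕ)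
        · rw [if_pos hj]
          apply Finset.sum_congr rfl
          intro i _
          congr 1
          simp only [eq_iff_iff]
          omega
        · rw [if_neg hj]
          rw [Finset.sum_eq_zero]
          intro i _
          rw [if_neg (by omega)]
    _ = ∑ i, (r i - (n - k)) := by
        apply Finset.sum_congr rfl
        intro i _
        rw [← Finset.card_filter, card_filter_Ico n (n - k) (r i) (hr i)]

lemma psum_sortAsc_conj {m n : ℕ} (r : Fin m → ℕ) (hr : ∀ i, r i ≤ n) (k : ℕ) (hk : k ≤ n) :
    psum (sortAsc (conj r n)) k = ∑ i, (r i - (n - k)) := by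
  rw [psum_sortAsc_of_min (conj r n) (univ.filter fun j : Fin n => n - k ≤ (j : ℕ)) k
    (by rw [card_filter_le_val]; omega) ?_]
  · exact sum_conj_tail r hr k
  · intro j hj j' hj'
    simp only [mem_filter, mem_univ, true_and] at hj hj'
    apply Finset.card_le_card
    intro i hi
    simp only [mem_filter, mem_univ, true_and] at hi ⊢
    omega

lemma scond_iff_weakSuper {m n : ℕ} (r : Fin m → ℕ) (c : Fin n → ℕ) (hr : ∀ i, r i ≤ n) :
    (∀ S : Finset (Fin n), ∑ i, (r i - (n - S.card)) ≤ ∑ j ∈ S, c j) ↔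
      WeakSuper c (conj r n) := by
  constructor
  · intro h
    have main : ∀ k, k ≤ n → psum (sortAsc (conj r n)) k ≤ psum (sortAsc c) k := by
      intro k hk
      obtain ⟨S, hScard, hSsum⟩ := psum_sortAsc_exists c k hk
      rw [hSsum, psum_sortAsc_conj r hr k hk]
      have := h S
      rwa [hScard] at this
    intro k
    rcases le_or_gt k n with hk | hk
    · exact main k hk
    · rw [psum_of_le _ k hk.le, psum_of_le _ k hk.le,
        ← psum_of_le (sortAsc (conj r n)) n le_rfl, ← psum_of_le (sortAsc c) n le_rfl]
      exact main n le_rfl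
  · intro h S
    have hk : S.card ≤ n := by simpa using Finset.card_le_univ S
    calc ∑ i, (r i - (n - S.card)) = psum (sortAsc (conj r n)) S.card :=
          (psum_sortAsc_conj r hr S.card hk).symm
      _ ≤ psum (sortAsc c) S.card := h S.card
      _ ≤ ∑ j ∈ S, c j := psum_sortAsc_le_sum c S S.card le_rfl

lemma matrix_to_scond {m n : ℕ} (r : Fin m → ℕ) (c : Fin n → ℕ)
    (A : Fin m → Fin n → ℕ)
    (h01 : ∀ i j, A i j = 0 ∨ A i j = 1)
    (hrow : ∀ i, ∑ j, A i j = r i)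
    (hcol : ∀ j, ∑ i, A i j ≤ c j) :
    ∀ S : Finset (Fin n), ∑ i, (r i - (n - S.card)) ≤ ∑ j ∈ S, c j := by
  intro S
  have hrowS : ∀ i, r i - (n - S.card) ≤ ∑ j ∈ S, A i j := by
    intro i
    have h1 : ∑ j ∈ S, A i j + ∑ j ∈ Sᶜ, A i j = r i := by
      rw [Finset.sum_add_sum_compl, hrow]
    have h2 : ∑ j ∈ Sᶜ, A i j ≤ n - S.card := by
      calc ∑ j ∈ Sᶜ, A i j ≤ ∑ j ∈ Sᶜ, 1 := Finset.sum_le_sum fun j _ => by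
            rcases h01 i j with h | h <;> omega
        _ = Sᶜ.card := by simp
        _ = n - S.card := by rw [Finset.card_compl]; simp
    omega
  calc ∑ i, (r i - (n - S.card)) ≤ ∑ i, ∑ j ∈ S, A i j := Finset.sum_le_sum fun i _ => hrowS i
    _ = ∑ j ∈ S, ∑ i, A i j := Finset.sum_comm
    _ ≤ ∑ j ∈ S, c j := Finset.sum_le_sum fun j _ => hcol j

lemma construct : ∀ (n : ℕ) {m : ℕ} (r : Fin m → ℕ) (c : Fin n → ℕ),
    (∀ i, r i ≤ n) →
    (∀ S : Finset (Fin n), ∑ i, (r i - (n - S.card)) ≤ ∑ j ∈ S, c j) →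
    ∃ A : Fin m → Fin n → ℕ,
      (∀ i j, A i j = 0 ∨ A i j = 1) ∧ (∀ i, ∑ j, A i j = r i) ∧ (∀ j, ∑ i, A i j ≤ c j) := by
  intro n
  induction n with
  | zero =>
    intro m r c hr _
    refine ⟨fun _ _ => 0, fun i j => Or.inl rfl, fun i => ?_, fun j => j.elim0⟩
    have := hr i
    simp
    omega
  | succ n ih =>
    intro m r c hr hs
    obtain ⟨j1, -, hj1⟩ := Finset.exists_max_image univ c ⟨0, mem_univ 0⟩
    set σ := Tuple.sort r with hσdef
    have hg : Monotone (r ∘ σ) := Tuple.monotone_sort r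
    set p := (univ.filter fun i : Fin m => 1 ≤ r i).card with hpdef
    set d := min (c j1) p with hddef
    have hdp : d ≤ p := min_le_right _ _
    have hpm : p ≤ m := by
      simpa using Finset.card_le_univ (univ.filter fun i : Fin m => 1 ≤ r i)
    set D := (univ.filter fun i0 : Fin m => m - d ≤ (i0 : ℕ)).image σ with hDdef
    have hDcard : D.card = d := by
      rw [hDdef, Finset.card_image_of_injective _ σ.injective, card_filter_le_val]
      omega
    have hmemD : ∀ i : Fin m, i ∈ D ↔ m - d ≤ ((σ.symm i : Fin m) : ℕ) := by
      intro i
      constructor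
      · intro hi
        obtain ⟨a, ha, rfl⟩ := Finset.mem_image.mp hi
        simp only [mem_filter, mem_univ, true_and] at ha
        rwa [Equiv.symm_apply_apply]
      · intro h
        exact Finset.mem_image.mpr ⟨σ.symm i,
          by simp only [mem_filter, mem_univ, true_and]; exact h, by simp⟩
    have hcard1 : (univ.filter fun i1 : Fin m => 1 ≤ r (σ i1)).card = p := by
      rw [hpdef]
      refine Finset.card_bij (fun i1 _ => σ i1) ?_ ?_ ?_
      · intro i1 hi1
        simp only [mem_filter, mem_univ, true_and] at hi1 ⊢
        exact hi1
      · intro a _ b _ hab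
        exact σ.injective hab
      · intro b hb
        simp only [mem_filter, mem_univ, true_and] at hb
        exact ⟨σ.symm b, by simp only [mem_filter, mem_univ, true_and,
          Equiv.apply_symm_apply]; exact hb, by simp⟩
    have hD2 : ∀ i ∈ D, 1 ≤ r i := by
      intro i hi
      obtain ⟨i0, hi0, rfl⟩ := Finset.mem_image.mp hi
      simp only [mem_filter, mem_univ, true_and] at hi0
      by_contra h0
      push_neg at h0
      have hg0 : r (σ i0) = 0 := by omega
      have hsub : (univ.filter fun i1 : Fin m => 1 ≤ r (σ i1)) ⊆
          univ.filter fun i1 : Fin m => (i0 : ℕ) + 1 ≤ (i1 : ℕ) := by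
        intro i1 hi1
        simp only [mem_filter, mem_univ, true_and] at hi1 ⊢
        by_contra hle
        push_neg at hle
        have h2 : (r ∘ σ) i1 ≤ (r ∘ σ) i0 := hg (by rw [Fin.le_def]; omega)
        simp only [Function.comp_apply] at h2
        omega
      have h3 := Finset.card_le_card hsub
      rw [hcard1, card_filter_le_val] at h3
      have := i0.isLt
      omega
    have hD3 : ∀ i ∈ D, ∀ i' , i' ∉ D → r i' ≤ r i := by
      intro i hi i' hi'
      obtain ⟨i0, hi0, rfl⟩ := Finset.mem_image.mp hi
      simp only [mem_filter, mem_univ, true_and] at hi0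
      rw [hmemD] at hi'
      push_neg at hi'
      have h2 : (r ∘ σ) (σ.symm i') ≤ (r ∘ σ) i0 := hg (by rw [Fin.le_def]; omega)
      simpa using h2
    have hq : ∀ j, (∑ i, (r i - n)) ≤ c j := by
      intro j
      have := hs {j}
      simpa using this
    have hqp : (∑ i, (r i - n)) ≤ p := by
      calc ∑ i, (r i - n) ≤ ∑ i, (if 1 ≤ r i then 1 else 0) := by
            apply Finset.sum_le_sum
            intro i _
            have := hr i
            split <;> omega
        _ = p := by rw [hpdef, Finset.card_filter]
    have hqd : (∑ i, (r i - n)) ≤ d := le_min (hq j1) hqp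
    set r' : Fin m → ℕ := fun i => if i ∈ D then r i - 1 else r i with hr'def
    have hr'le : ∀ i, r' i ≤ n := by
      intro i
      by_cases hi : i ∈ D
      · have := hr i
        simp only [hr'def, if_pos hi]
        have := hD2 i hi
        omega
      · simp only [hr'def, if_neg hi]
        by_contra hcon
        push_neg at hcon
        have hF'sub : insert i D ⊆ univ.filter fun i1 : Fin m => n + 1 ≤ r i1 := by
          intro i1 h1
          rcases Finset.mem_insert.mp h1 with h1 | h1
          · subst h1
            simp only [mem_filter, mem_univ, true_and]
            omega
          · have := hD3 i1 h1 i hi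
            simp only [mem_filter, mem_univ, true_and]
            omega
        have hc1 : d + 1 ≤ (univ.filter fun i1 : Fin m => n + 1 ≤ r i1).card := by
          rw [← hDcard, ← Finset.card_insert_of_notMem hi]
          exact Finset.card_le_card hF'sub
        have hc2 : (univ.filter fun i1 : Fin m => n + 1 ≤ r i1).card ≤ ∑ i, (r i - n) := by
          rw [Finset.card_filter]
          apply Finset.sum_le_sum
          intro i1 _
          split <;> omega
        omega
    have scond' : ∀ S' : Finset (Fin n), ∑ i, (r' i - (n - S'.card)) ≤
        ∑ j ∈ S', c (j1.succAbove j) := by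
      intro S'
      set k := n - S'.card with hkdef
      have hq' : S'.card ≤ n := by simpa using Finset.card_le_univ S'
      set S := S'.image j1.succAbove with hSdef
      have hScard : S.card = S'.card :=
        Finset.card_image_of_injective _ Fin.succAbove_right_injective
      have hj1S : j1 ∉ S := by
        rw [hSdef]
        simp only [Finset.mem_image, not_exists]
        intro a
        intro ha
        exact Fin.succAbove_ne j1 a ha.2
      have hsumS : ∑ j ∈ S, c j = ∑ j ∈ S', c (j1.succAbove j) :=
        Finset.sum_image fun a _ b _ h => Fin.succAbove_right_injective h
      set F := univ.filter fun i : Fin m => k + 1 ≤ r i with hFdef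
      set e := (D ∩ F).card with hedef
      have hid1 : ∑ i, (r i - k) = ∑ i, (r' i - k) + e := by
        have hpt : ∀ i : Fin m, r i - k = (r' i - k) + (if i ∈ D ∩ F then 1 else 0) := by
          intro i
          by_cases hiD : i ∈ D
          · have h1 := hD2 i hiD
            by_cases hiF : i ∈ F
            · have h2 : k + 1 ≤ r i := by
                have := Finset.mem_filter.mp hiF
                exact this.2
              rw [if_pos (Finset.mem_inter.mpr ⟨hiD, hiF⟩)]
              simp only [hr'def, if_pos hiD]
              omega
            · have h2 : ¬ (k + 1 ≤ r i) := by
                intro hcon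
                exact hiF (Finset.mem_filter.mpr ⟨mem_univ _, hcon⟩)
              rw [if_neg (fun hcon => hiF (Finset.mem_inter.mp hcon).2)]
              simp only [hr'def, if_pos hiD]
              omega
          · rw [if_neg (fun hcon => hiD (Finset.mem_inter.mp hcon).1)]
            simp only [hr'def, if_neg hiD]
            omega
        rw [Finset.sum_congr rfl fun i _ => hpt i, Finset.sum_add_distrib]
        congr 1
        rw [← Finset.card_filter]
        congr 1
        ext i
        simp
      have he : min (c j1) F.card ≤ e := by
        by_cases hFD : F ⊆ D
        · have h1 : D ∩ F = F := Finset.inter_eq_right.mpr hFD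
          rw [hedef, h1]
          exact min_le_right _ _
        · obtain ⟨i', hi'F, hi'D⟩ := Finset.not_subset.mp hFD
          have hDF : D ⊆ F := by
            intro i hi
            have h1 := hD3 i hi i' hi'D
            have h2 := (Finset.mem_filter.mp hi'F).2
            exact Finset.mem_filter.mpr ⟨mem_univ _, by omega⟩
          have h1 : D ∩ F = D := Finset.inter_eq_left.mpr hDF
          have hFp : F.card ≤ p := by
            rw [hpdef]
            apply Finset.card_le_card
            intro i hi
            have := (Finset.mem_filter.mp hi).2
            exact Finset.mem_filter.mpr ⟨mem_univ _, by omega⟩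
          rw [hedef, h1, hDcard, hddef]
          omega
      rcases le_or_gt F.card (c j1) with hcase | hcase
      · have he2 : F.card ≤ e := le_trans (by omega) he
        have hyp1 := hs S
        rw [hScard, hsumS] at hyp1
        have hlev : n + 1 - S'.card = k + 1 := by omega
        rw [hlev] at hyp1
        have hid2 : ∑ i, (r i - k) = ∑ i, (r i - (k + 1)) + F.card := by
          have hpt : ∀ i : Fin m, r i - k = (r i - (k + 1)) + (if i ∈ F then 1 else 0) := by
            intro i
            by_cases hiF : i ∈ F
            · have h2 := (Finset.mem_filter.mp hiF).2
              rw [if_pos hiF]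
              omega
            · have h2 : ¬ (k + 1 ≤ r i) := fun hcon =>
                hiF (Finset.mem_filter.mpr ⟨mem_univ _, hcon⟩)
              rw [if_neg hiF]
              omega
          rw [Finset.sum_congr rfl fun i _ => hpt i, Finset.sum_add_distrib]
          congr 1
          rw [← Finset.card_filter]
          congr 1
          ext i
          simp
        omega
      · have he2 : c j1 ≤ e := le_trans (by omega) he
        have hyp2 := hs (insert j1 S)
        rw [Finset.card_insert_of_notMem hj1S, hScard, Finset.sum_insert hj1S, hsumS] at hyp2
        have hlev : n + 1 - (S'.card + 1) = k := by omega
        rw [hlev] at hyp2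
        omega
    obtain ⟨A', hA'01, hA'row, hA'col⟩ := ih r' (fun j => c (j1.succAbove j)) hr'le scond'
    set A : Fin m → Fin (n + 1) → ℕ := fun i j =>
      if j = j1 then (if i ∈ D then 1 else 0)
      else ∑ k0 : Fin n, if j = j1.succAbove k0 then A' i k0 else 0 with hAdef
    have hAab : ∀ i k0, A i (j1.succAbove k0) = A' i k0 := by
      intro i k0
      rw [hAdef]
      simp only
      rw [if_neg (Fin.succAbove_ne j1 k0)]
      rw [Finset.sum_eq_single k0]
      · rw [if_pos rfl]
      · intro b _ hb
        rw [if_neg]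
        intro h
        exact hb (Fin.succAbove_right_injective h.symm)
      · intro h
        exact absurd (mem_univ k0) h
    have hAj1 : ∀ i, A i j1 = if i ∈ D then 1 else 0 := by
      intro i
      rw [hAdef]
      simp
    refine ⟨A, ?_, ?_, ?_⟩
    · intro i j
      by_cases hj : j = j1
      · subst hj
        rw [hAj1]
        split
        · exact Or.inr rfl
        · exact Or.inl rfl
      · obtain ⟨k0, hk0⟩ := Fin.exists_succAbove_eq hj
        rw [← hk0, hAab]
        exact hA'01 i k0
    · intro i
      rw [Fin.sum_univ_succAbove (fun j => A i j) j1, hAj1]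
      have h1 : ∑ k0, A i (j1.succAbove k0) = ∑ k0, A' i k0 :=
        Finset.sum_congr rfl fun k0 _ => hAab i k0
      rw [h1, hA'row]
      by_cases hi : i ∈ D
      · have h2 := hD2 i hi
        simp only [hr'def, if_pos hi]
        omega
      · simp only [hr'def, if_neg hi]
        omega
    · intro j
      by_cases hj : j = j1
      · rw [hj]
        have h1 : ∑ i, A i j1 = D.card := by
          rw [Finset.sum_congr rfl fun i _ => hAj1 i, ← Finset.card_filter]
          congr 1
          ext i
          simp
        rw [h1, hDcard]
        exact le_trans (min_le_left _ _) le_rfl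
      · obtain ⟨k0, hk0⟩ := Fin.exists_succAbove_eq hj
        rw [← hk0]
        calc ∑ i, A i (j1.succAbove k0) = ∑ i, A' i k0 :=
              Finset.sum_congr rfl fun i _ => hAab i k0
          _ ≤ c (j1.succAbove k0) := hA'col k0

theorem stmt_12 {m n : ℕ} (r : Fin m → ℕ) (c : Fin n → ℕ) (hr : ∀ i, r i ≤ n) :
    (∃ A : Fin m → Fin n → ℕ,
        (∀ i j, A i j = 0 ∨ A i j = 1) ∧
        (∀ i, ∑ j, A i j = r i) ∧
        (∀ j, ∑ i, A i j ≤ c j)) ↔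
    WeakSuper c (conj r n) := by
  rw [← scond_iff_weakSuper r c hr]
  constructor
  · rintro ⟨A, h01, hrow, hcol⟩
    exact matrix_to_scond r c A h01 hrow hcol
  · intro h
    exact construct n r c hr h
end
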